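/- arXiv:2203.11972 — 2 statements merged into one kernel-verified Lean document; each statement's English description precedes it below -/
import Mathlib

section
/- Let F be a self-map on S ⊂ ℝ^n such that |Fx − Fy| ≤ A|x − y| (entrywise, where |·| is the entrywise absolute value) for some matrix A ≥ 0 with r(A) < 1. Then F is eventually contracting on S with respect to the Euclidean norm: there exist k ∈ ℕ and λ < 1 such that ‖F^k x − F^k y‖ ≤ λ‖x − y‖ for all x, y ∈ S. Consequently, if S is closed and F maps S into itself, F has a unique fixed point in S and iterates from any starting point converge to it. -/
open Filter Topology

open scoped ENNReal NNReal

/-- The spectral radius of a real square matrix: the maximum modulus of its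
(possibly complex) eigenvalues. -/
noncomputable def specRad {n : ℕ} (A : Matrix (Fin n) (Fin n) ℝ) : ℝ :=
  sSup {r : ℝ | ∃ μ : ℂ,
    (∃ v : Fin n → ℂ, v ≠ 0 ∧ (A.map Complex.ofReal).mulVec v = μ • v) ∧
    r = ‖μ‖}

attribute [local instance] Matrix.linftyOpNormedRing Matrix.linftyOpNormedAlgebra

/-- Gelfand-type consequence: if the spectral radius is `< 1`, some power of the
matrix has (L∞-operator) norm `< 1`. -/
lemma specRad_exists_pow_norm_lt {n : ℕ} (hn : 0 < n) (A : Matrix (Fin n) (Fin n) ℝ)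
    (hr : specRad A < 1) : ∃ k : ℕ, 1 ≤ k ∧ ‖A ^ k‖ < 1 := by
  haveI : Nonempty (Fin n) := Fin.pos_iff_nonempty.mp hn
  set B : Matrix (Fin n) (Fin n) ℂ := A.map Complex.ofReal with hB
  have hspec : ∀ μ : ℂ, μ ∈ spectrum ℂ B ↔
      ∃ v : Fin n → ℂ, v ≠ 0 ∧ B.mulVec v = μ • v := by
    intro μ
    rw [← AlgEquiv.spectrum_eq (Matrix.toLinAlgEquiv' : Matrix (Fin n) (Fin n) ℂ ≃ₐ[ℂ] _) B,
      ← Module.End.hasEigenvalue_iff_mem_spectrum]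
    constructor
    · intro h
      obtain ⟨v, hv⟩ := h.exists_hasEigenvector
      refine ⟨v, hv.2, ?_⟩
      have := Module.End.mem_eigenspace_iff.mp hv.1
      simpa [Matrix.toLinAlgEquiv'_apply] using this
    · rintro ⟨v, hv0, hv⟩
      exact Module.End.hasEigenvalue_of_hasEigenvector
        ⟨Module.End.mem_eigenspace_iff.mpr (by simpa [Matrix.toLinAlgEquiv'_apply] using hv), hv0⟩
  have hbdd : BddAbove {r : ℝ | ∃ μ : ℂ,
      (∃ v : Fin n → ℂ, v ≠ 0 ∧ B.mulVec v = μ • v) ∧ r = ‖μ‖} := by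
    refine ⟨‖B‖, fun r hr => ?_⟩
    obtain ⟨μ, hμ, rfl⟩ := hr
    have : μ ∈ spectrum ℂ B := (hspec μ).mpr hμ
    simpa using spectrum.norm_le_norm_of_mem this
  have hsr : spectralRadius ℂ B < 1 := by
    have hle : spectralRadius ℂ B ≤ ENNReal.ofReal (specRad A) := by
      refine iSup₂_le fun μ hμ => ?_
      have h1 : ‖μ‖ ≤ specRad A :=
        le_csSup hbdd ⟨μ, (hspec μ).mp hμ, rfl⟩
      rw [← enorm_eq_nnnorm, ← ofReal_norm]
      exact ENNReal.ofReal_le_ofReal (by simpa using h1)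
    exact hle.trans_lt (ENNReal.ofReal_lt_one.mpr hr)
  have htend := spectrum.pow_nnnorm_pow_one_div_tendsto_nhds_spectralRadius B
  have hev : ∀ᶠ k : ℕ in atTop, (‖B ^ k‖₊ : ℝ≥0∞) ^ (1 / (k:ℝ)) < 1 :=
    htend.eventually_lt_const hsr
  obtain ⟨k, hklt, hk1⟩ := (hev.and (eventually_ge_atTop 1)).exists
  have hBk : (‖B ^ k‖₊ : ℝ≥0∞) < 1 := by
    by_contra h
    push_neg at h
    have : (1:ℝ≥0∞) ≤ (‖B ^ k‖₊ : ℝ≥0∞) ^ (1 / (k:ℝ)) := by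
      calc (1:ℝ≥0∞) = 1 ^ (1 / (k:ℝ)) := (ENNReal.one_rpow _).symm
        _ ≤ _ := ENNReal.rpow_le_rpow h (by positivity)
    exact absurd hklt (not_lt.mpr this)
  have hmap : B ^ k = (A ^ k).map Complex.ofReal := by
    exact (map_pow (Complex.ofRealHom.mapMatrix :
      Matrix (Fin n) (Fin n) ℝ →+* Matrix (Fin n) (Fin n) ℂ) A k).symm
  have hnorm : ‖A ^ k‖₊ = ‖B ^ k‖₊ := by
    rw [hmap, Matrix.linfty_opNNNorm_def, Matrix.linfty_opNNNorm_def]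
    congr 1
    ext i
    congr 1
    simp [Matrix.map_apply]
  refine ⟨k, hk1, ?_⟩
  have : ‖A ^ k‖₊ < 1 := by rw [hnorm]; exact_mod_cast hBk
  exact_mod_cast this

lemma pow_entry_nonneg {n : ℕ} {A : Matrix (Fin n) (Fin n) ℝ}
    (hA : ∀ i j, 0 ≤ A i j) : ∀ m i j, 0 ≤ (A ^ m) i j := by
  intro m
  induction m with
  | zero =>
    intro i j
    classical
    by_cases h : i = j <;> simp [pow_zero, Matrix.one_apply, h]
  | succ m ih =>
    intro i j
    rw [pow_succ, Matrix.mul_apply]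
    exact Finset.sum_nonneg fun l _ => mul_nonneg (ih i l) (hA l j)

/-- If F : S → S satisfies |Fx − Fy| ≤ A|x − y| entrywise for a nonnegative
matrix A with r(A) < 1, then F is eventually contracting on S with respect to
the Euclidean norm; consequently, if S is closed (and nonempty), F has a
unique fixed point in S and iterates from any starting point in S converge
to it. -/
theorem eventually_contracting_of_matrix_bound
    {n : ℕ} (S : Set (Fin n → ℝ)) (hS : S.Nonempty)
    (F : (Fin n → ℝ) → (Fin n → ℝ)) (hFS : ∀ x ∈ S, F x ∈ S)
    (A : Matrix (Fin n) (Fin n) ℝ) (hA : ∀ i j, 0 ≤ A i j)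
    (hr : specRad A < 1)
    (hLip : ∀ x ∈ S, ∀ y ∈ S, ∀ i,
      |F x i - F y i| ≤ A.mulVec (fun j => |x j - y j|) i) :
    (∃ k : ℕ, ∃ lam : ℝ, lam < 1 ∧ ∀ x ∈ S, ∀ y ∈ S,
      Real.sqrt (∑ i, (F^[k] x i - F^[k] y i) ^ 2) ≤
        lam * Real.sqrt (∑ i, (x i - y i) ^ 2)) ∧
    (IsClosed S → ∃ p ∈ S, F p = p ∧ (∀ q ∈ S, F q = q → q = p) ∧
      ∀ x ∈ S, Tendsto (fun m : ℕ => F^[m] x) atTop (𝓝 p)) := by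
  classical
  rcases Nat.eq_zero_or_pos n with hn | hn
  · -- trivial case n = 0
    subst hn
    obtain ⟨s0, hs0⟩ := hS
    refine ⟨⟨0, 0, by norm_num, fun x _ y _ => by simp⟩, fun _ =>
      ⟨s0, hs0, Subsingleton.elim _ _, fun q _ _ => Subsingleton.elim _ _, fun x _ => ?_⟩⟩
    have h : (fun m : ℕ => F^[m] x) = fun _ => s0 := funext fun m => Subsingleton.elim _ _
    rw [h]
    exact tendsto_const_nhds
  haveI : Nonempty (Fin n) := Fin.pos_iff_nonempty.mp hn
  obtain ⟨k, hk1, hck⟩ := specRad_exists_pow_norm_lt hn A hr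
  have hc0 : (0:ℝ) ≤ ‖A ^ k‖ := norm_nonneg _
  have hsn : (1:ℝ) ≤ Real.sqrt n := by
    rw [show (1:ℝ) = Real.sqrt 1 by simp]
    exact Real.sqrt_le_sqrt (by exact_mod_cast hn)
  have hsn0 : (0:ℝ) < Real.sqrt n := lt_of_lt_of_le one_pos hsn
  obtain ⟨m, hm⟩ := exists_pow_lt_of_lt_one
    (by positivity : (0:ℝ) < 1 / Real.sqrt n) hck
  have hsle : (1:ℝ) / Real.sqrt n ≤ 1 := by
    rw [div_le_one hsn0]; exact hsn
  have hκ0 : (0:ℝ) ≤ ‖A ^ k‖ ^ m := pow_nonneg hc0 m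
  have hκ1 : ‖A ^ k‖ ^ m < 1 := lt_of_lt_of_le hm hsle
  have hm0 : m ≠ 0 := by
    rintro rfl
    rw [pow_zero] at hκ1
    exact lt_irrefl _ hκ1
  have hK0 : 0 < k * m := Nat.mul_pos hk1 (Nat.pos_of_ne_zero hm0)
  have hAK : ‖A ^ (k * m)‖ ≤ ‖A ^ k‖ ^ m := by
    rw [pow_mul]
    exact norm_pow_le' _ (Nat.pos_of_ne_zero hm0)
  -- membership of iterates
  have hmem : ∀ j : ℕ, ∀ x ∈ S, F^[j] x ∈ S := by
    intro j
    induction j with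
    | zero => intro x hx; simpa using hx
    | succ j ih =>
      intro x hx
      rw [Function.iterate_succ_apply']
      exact hFS _ (ih x hx)
  -- entrywise iterated bound
  have hIter : ∀ j : ℕ, ∀ x ∈ S, ∀ y ∈ S, ∀ i,
      |F^[j] x i - F^[j] y i| ≤ (A ^ j).mulVec (fun l => |x l - y l|) i := by
    intro j
    induction j with
    | zero =>
      intro x _ y _ i
      simp [pow_zero, Matrix.one_mulVec]
    | succ j ih =>
      intro x hx y hy i
      rw [Function.iterate_succ_apply, Function.iterate_succ_apply]
      calc |F^[j] (F x) i - F^[j] (F y) i|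
          ≤ (A ^ j).mulVec (fun l => |F x l - F y l|) i :=
            ih (F x) (hFS x hx) (F y) (hFS y hy) i
        _ ≤ (A ^ j).mulVec (A.mulVec fun l => |x l - y l|) i := by
            simp only [Matrix.mulVec, dotProduct]
            exact Finset.sum_le_sum fun l _ =>
              mul_le_mul_of_nonneg_left (hLip x hx y hy l) (pow_entry_nonneg hA j i l)
        _ = (A ^ (j + 1)).mulVec (fun l => |x l - y l|) i := by
            rw [Matrix.mulVec_mulVec, ← pow_succ]
  -- entry of mulVec is bounded by norm product
  have hMbound : ∀ (M : Matrix (Fin n) (Fin n) ℝ) (v : Fin n → ℝ) (i : Fin n),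
      M.mulVec v i ≤ ‖M‖ * ‖v‖ := by
    intro M v i
    calc M.mulVec v i ≤ |M.mulVec v i| := le_abs_self _
      _ = ‖M.mulVec v i‖ := (Real.norm_eq_abs _).symm
      _ ≤ ‖M.mulVec v‖ := norm_le_pi_norm _ i
      _ ≤ ‖M‖ * ‖v‖ := Matrix.linfty_opNorm_mulVec M v
  have hdist : ∀ x y : Fin n → ℝ, ‖fun l => |x l - y l|‖ ≤ dist x y := by
    intro x y
    refine (pi_norm_le_iff_of_nonneg dist_nonneg).mpr fun l => ?_
    rw [Real.norm_eq_abs, abs_abs, ← Real.dist_eq]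
    exact dist_le_pi_dist x y l
  -- key contraction bound entrywise
  have hKey : ∀ x ∈ S, ∀ y ∈ S, ∀ i,
      |F^[k * m] x i - F^[k * m] y i| ≤ ‖A ^ k‖ ^ m * dist x y := by
    intro x hx y hy i
    calc |F^[k * m] x i - F^[k * m] y i|
        ≤ (A ^ (k * m)).mulVec (fun l => |x l - y l|) i := hIter (k * m) x hx y hy i
      _ ≤ ‖A ^ (k * m)‖ * ‖fun l => |x l - y l|‖ := hMbound _ _ i
      _ ≤ ‖A ^ k‖ ^ m * dist x y :=
          mul_le_mul hAK (hdist x y) (norm_nonneg _) hκ0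
  constructor
  · -- eventual contraction in the Euclidean norm
    refine ⟨k * m, Real.sqrt n * ‖A ^ k‖ ^ m, ?_, ?_⟩
    · have h := mul_lt_mul_of_pos_left hm hsn0
      rwa [mul_one_div_cancel (ne_of_gt hsn0)] at h
    · intro x hx y hy
      have hd : dist x y ≤ Real.sqrt (∑ i, (x i - y i) ^ 2) := by
        refine (dist_pi_le_iff (Real.sqrt_nonneg _)).mpr fun i => ?_
        rw [Real.dist_eq, ← Real.sqrt_sq_eq_abs]
        exact Real.sqrt_le_sqrt
          (Finset.single_le_sum (f := fun j => (x j - y j) ^ 2) (fun j _ => sq_nonneg _) (Finset.mem_univ i))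
      calc Real.sqrt (∑ i, (F^[k * m] x i - F^[k * m] y i) ^ 2)
          ≤ Real.sqrt (∑ _i : Fin n, (‖A ^ k‖ ^ m * dist x y) ^ 2) := by
            refine Real.sqrt_le_sqrt (Finset.sum_le_sum fun i _ => ?_)
            rw [← sq_abs]
            exact pow_le_pow_left₀ (abs_nonneg _) (hKey x hx y hy i) 2
        _ = Real.sqrt n * (‖A ^ k‖ ^ m * dist x y) := by
            rw [Finset.sum_const, Finset.card_univ, Fintype.card_fin, nsmul_eq_mul,
              Real.sqrt_mul (by positivity), Real.sqrt_sq (mul_nonneg hκ0 dist_nonneg)]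
        _ ≤ Real.sqrt n * ‖A ^ k‖ ^ m * Real.sqrt (∑ i, (x i - y i) ^ 2) := by
            rw [mul_assoc]
            exact mul_le_mul_of_nonneg_left
              (mul_le_mul_of_nonneg_left hd hκ0) (Real.sqrt_nonneg _)
  · -- fixed point theory
    intro hcl
    haveI : Nonempty S := hS.to_subtype
    haveI : CompleteSpace S := hcl.completeSpace_coe
    set g : S → S := fun a => ⟨F^[k * m] a, hmem (k * m) a a.2⟩ with hg
    have hgc : ContractingWith ⟨‖A ^ k‖ ^ m, hκ0⟩ g := by
      constructor
      · exact_mod_cast hκ1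
      · refine LipschitzWith.of_dist_le_mul fun a b => ?_
        show dist (g a).val (g b).val ≤ ‖A ^ k‖ ^ m * dist a.val b.val
        refine (dist_pi_le_iff (mul_nonneg hκ0 dist_nonneg)).mpr fun i => ?_
        rw [Real.dist_eq]
        exact hKey a a.2 b b.2 i
    set p₀ : S := ContractingWith.fixedPoint g hgc with hp₀
    have hfix : g p₀ = p₀ := hgc.fixedPoint_isFixedPt
    have hpfix : F^[k * m] p₀.val = p₀.val := congrArg Subtype.val hfix
    have hFsp : F p₀.val = p₀.val := by
      have hfp : Function.IsFixedPt g ⟨F p₀.val, hFS _ p₀.2⟩ := by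
        show g _ = _
        apply Subtype.ext
        show F^[k * m] (F p₀.val) = F p₀.val
        rw [← Function.iterate_succ_apply, Function.iterate_succ_apply', hpfix]
      have := hgc.fixedPoint_unique hfp
      rw [← hp₀] at this
      exact congrArg Subtype.val this
    refine ⟨p₀.val, p₀.2, hFsp, ?_, ?_⟩
    · intro q hq hqf
      have hfp : Function.IsFixedPt g ⟨q, hq⟩ := by
        apply Subtype.ext
        show F^[k * m] q = q
        exact Function.IsFixedPt.iterate hqf (k * m)
      have := hgc.fixedPoint_unique hfp
      rw [← hp₀] at this
      exact congrArg Subtype.val this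
    · intro x hx
      have hL0 : (0:ℝ) ≤ ‖A‖ := norm_nonneg _
      have hFlip : ∀ a ∈ S, ∀ b ∈ S, dist (F a) (F b) ≤ ‖A‖ * dist a b := by
        intro a ha b hb
        refine (dist_pi_le_iff (mul_nonneg hL0 dist_nonneg)).mpr fun i => ?_
        rw [Real.dist_eq]
        calc |F a i - F b i| ≤ A.mulVec (fun l => |a l - b l|) i := hLip a ha b hb i
          _ ≤ ‖A‖ * ‖fun l => |a l - b l|‖ := hMbound A _ i
          _ ≤ ‖A‖ * dist a b := mul_le_mul_of_nonneg_left (hdist a b) hL0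
      have hFr : ∀ r : ℕ, ∀ a ∈ S, ∀ b ∈ S,
          dist (F^[r] a) (F^[r] b) ≤ ‖A‖ ^ r * dist a b := by
        intro r
        induction r with
        | zero => intro a _ b _; simp
        | succ r ih =>
          intro a ha b hb
          rw [Function.iterate_succ_apply', Function.iterate_succ_apply']
          calc dist (F (F^[r] a)) (F (F^[r] b))
              ≤ ‖A‖ * dist (F^[r] a) (F^[r] b) := hFlip _ (hmem r a ha) _ (hmem r b hb)
            _ ≤ ‖A‖ * (‖A‖ ^ r * dist a b) :=
                mul_le_mul_of_nonneg_left (ih a ha b hb) hL0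
            _ = ‖A‖ ^ (r + 1) * dist a b := by ring
      have hGq : ∀ q : ℕ, dist (F^[k * m * q] x) p₀.val ≤
          (‖A ^ k‖ ^ m) ^ q * dist x p₀.val := by
        intro q
        induction q with
        | zero => simp
        | succ q ih =>
          have hmemq : F^[k * m * q] x ∈ S := hmem _ x hx
          have heqn : k * m * (q + 1) = k * m + k * m * q := by ring
          rw [heqn, Function.iterate_add_apply]
          calc dist (F^[k * m] (F^[k * m * q] x)) p₀.val
              = dist (F^[k * m] (F^[k * m * q] x)) (F^[k * m] p₀.val) := by rw [hpfix]
            _ ≤ ‖A ^ k‖ ^ m * dist (F^[k * m * q] x) p₀.val := by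
                refine (dist_pi_le_iff (mul_nonneg hκ0 dist_nonneg)).mpr fun i => ?_
                rw [Real.dist_eq]
                exact hKey _ hmemq _ p₀.2 i
            _ ≤ ‖A ^ k‖ ^ m * ((‖A ^ k‖ ^ m) ^ q * dist x p₀.val) :=
                mul_le_mul_of_nonneg_left ih hκ0
            _ = (‖A ^ k‖ ^ m) ^ (q + 1) * dist x p₀.val := by ring
      have hMx0 : (0:ℝ) ≤ max 1 ‖A‖ := le_trans zero_le_one (le_max_left 1 ‖A‖)
      have hbound : ∀ j : ℕ, dist (F^[j] x) p₀.val ≤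
          (max 1 ‖A‖) ^ (k * m) * dist x p₀.val * (‖A ^ k‖ ^ m) ^ (j / (k * m)) := by
        intro j
        have hj : j % (k * m) + k * m * (j / (k * m)) = j := Nat.mod_add_div j (k * m)
        have h1 : F^[j] x = F^[j % (k * m)] (F^[k * m * (j / (k * m))] x) := by
          conv_lhs => rw [← hj]
          rw [Function.iterate_add_apply]
        have hp_r : F^[j % (k * m)] p₀.val = p₀.val :=
          Function.IsFixedPt.iterate hFsp (j % (k * m))
        calc dist (F^[j] x) p₀.val
            = dist (F^[j % (k * m)] (F^[k * m * (j / (k * m))] x))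
                (F^[j % (k * m)] p₀.val) := by rw [h1, hp_r]
          _ ≤ ‖A‖ ^ (j % (k * m)) * dist (F^[k * m * (j / (k * m))] x) p₀.val :=
              hFr _ _ (hmem _ x hx) _ p₀.2
          _ ≤ (max 1 ‖A‖) ^ (k * m) *
                ((‖A ^ k‖ ^ m) ^ (j / (k * m)) * dist x p₀.val) := by
              refine mul_le_mul ?_ (hGq _) dist_nonneg (pow_nonneg hMx0 _)
              calc ‖A‖ ^ (j % (k * m)) ≤ (max 1 ‖A‖) ^ (j % (k * m)) :=
                    pow_le_pow_left₀ hL0 (le_max_right 1 ‖A‖) _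
                _ ≤ (max 1 ‖A‖) ^ (k * m) :=
                    pow_le_pow_right₀ (le_max_left 1 ‖A‖)
                      (le_of_lt (Nat.mod_lt j hK0))
          _ = (max 1 ‖A‖) ^ (k * m) * dist x p₀.val *
                (‖A ^ k‖ ^ m) ^ (j / (k * m)) := by ring
      rw [tendsto_iff_dist_tendsto_zero]
      refine squeeze_zero (fun j => dist_nonneg) hbound ?_
      have h2 : Tendsto (fun j : ℕ => (‖A ^ k‖ ^ m) ^ (j / (k * m))) atTop (𝓝 0) := by
        refine (tendsto_pow_atTop_nhds_zero_of_lt_one hκ0 hκ1).comp ?_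
        refine tendsto_atTop_atTop.mpr fun b => ⟨b * (k * m), fun j hj => ?_⟩
        exact (Nat.le_div_iff_mul_le hK0).mpr hj
      have h3 := h2.const_mul ((max 1 ‖A‖) ^ (k * m) * dist x p₀.val)
      simpa [mul_assoc] using h3
end

section
/- Markov–Dobrushin contraction: for any stochastic matrix P on a finite set S and any distributions φ, ψ on S, the ℓ1 deviation satisfies ‖φP − ψP‖₁ ≤ (1 − α(P))·‖φ − ψ‖₁, where α(P) = min over pairs (x,x') of Σ_y min{P(x,y), P(x',y)}; iterating, ‖φP^t − ψP^t‖₁ ≤ (1 − α(P))^t ‖φ − ψ‖₁ for all t ∈ ℕ. In particular, if α(P^k) > 0 for some k, then P has a unique stationary distribution ψ* and φP^t → ψ* for every distribution φ. -/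
open Filter Topology

/-- A probability distribution on a finite set, viewed as a nonnegative
vector summing to one. -/
def IsDistribution {S : Type*} [Fintype S] (φ : S → ℝ) : Prop :=
  (∀ x, 0 ≤ φ x) ∧ ∑ x, φ x = 1

/-- A stochastic matrix: nonnegative entries with unit row sums. -/
def IsStochastic {S : Type*} [Fintype S] (P : Matrix S S ℝ) : Prop :=
  (∀ x y, 0 ≤ P x y) ∧ ∀ x, ∑ y, P x y = 1

/-- The Markov–Dobrushin coefficient of P:
α(P) = min_{(x,x')} Σ_y min{P(x,y), P(x',y)}. -/
noncomputable def dobrushin {S : Type*} [Fintype S] (P : Matrix S S ℝ) : ℝ :=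
  ⨅ p : S × S, ∑ y, min (P p.1 y) (P p.2 y)

/-- The ℓ1 deviation between two vectors on a finite set. -/
def l1Dev {S : Type*} [Fintype S] (φ ψ : S → ℝ) : ℝ :=
  ∑ x, |φ x - ψ x|

section
variable {S : Type*} [Fintype S]

lemma vecMul_apply' (φ : S → ℝ) (P : Matrix S S ℝ) (y : S) :
    Matrix.vecMul φ P y = ∑ x, φ x * P x y := by
  simp [Matrix.vecMul, dotProduct]

lemma stoch_mul {P Q : Matrix S S ℝ} (hP : IsStochastic P) (hQ : IsStochastic Q) :
    IsStochastic (P * Q) := by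
  constructor
  · intro x y
    rw [Matrix.mul_apply]
    exact Finset.sum_nonneg fun z _ => mul_nonneg (hP.1 x z) (hQ.1 z y)
  · intro x
    simp only [Matrix.mul_apply]
    rw [Finset.sum_comm]
    simp only [← Finset.mul_sum]
    simp [hQ.2, hP.2 x]

lemma stoch_pow [DecidableEq S] {P : Matrix S S ℝ} (hP : IsStochastic P) (t : ℕ) :
    IsStochastic (P ^ t) := by
  induction t with
  | zero =>
    rw [pow_zero]
    exact ⟨fun x y => by by_cases h : x = y <;> simp [Matrix.one_apply, h],
      fun x => by simp [Matrix.one_apply]⟩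
  | succ n ih => rw [pow_succ]; exact stoch_mul ih hP

lemma dist_vecMul {P : Matrix S S ℝ} (hP : IsStochastic P) {φ : S → ℝ}
    (hφ : IsDistribution φ) : IsDistribution (Matrix.vecMul φ P) := by
  constructor
  · intro y
    rw [vecMul_apply']
    exact Finset.sum_nonneg fun x _ => mul_nonneg (hφ.1 x) (hP.1 x y)
  · simp only [vecMul_apply']
    rw [Finset.sum_comm]
    simp only [← Finset.mul_sum]
    simp [hP.2, hφ.2]

lemma dob_bddBelow (P : Matrix S S ℝ) (hP : IsStochastic P) :
    BddBelow (Set.range fun p : S × S => ∑ y, min (P p.1 y) (P p.2 y)) := by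
  refine ⟨0, ?_⟩
  rintro r ⟨p, rfl⟩
  exact Finset.sum_nonneg fun y _ => le_min (hP.1 p.1 y) (hP.1 p.2 y)

lemma dob_le (P : Matrix S S ℝ) (hP : IsStochastic P) (x x' : S) :
    dobrushin P ≤ ∑ y, min (P x y) (P x' y) :=
  ciInf_le (dob_bddBelow P hP) (x, x')

lemma dob_nonneg (P : Matrix S S ℝ) (hP : IsStochastic P) [Nonempty (S × S)] :
    0 ≤ dobrushin P :=
  le_ciInf fun p => Finset.sum_nonneg fun y _ => le_min (hP.1 p.1 y) (hP.1 p.2 y)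

lemma dob_le_one (P : Matrix S S ℝ) (hP : IsStochastic P) (x : S) :
    dobrushin P ≤ 1 := by
  refine (dob_le P hP x x).trans ?_
  simp only [min_self]
  exact le_of_eq (hP.2 x)

lemma one_sub_dob_nonneg (P : Matrix S S ℝ) (hP : IsStochastic P) :
    0 ≤ 1 - dobrushin P := by
  rcases isEmpty_or_nonempty S with h | ⟨⟨x⟩⟩
  · have : IsEmpty (S × S) := by infer_instance
    unfold dobrushin
    rw [Real.iInf_of_isEmpty]
    norm_num
  · linarith [dob_le_one P hP x]

lemma row_dist (P : Matrix S S ℝ) (hP : IsStochastic P) (x x' : S) :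
    ∑ y, |P x y - P x' y| ≤ 2 * (1 - dobrushin P) := by
  have h1 : ∑ y, |P x y - P x' y| = 2 - 2 * ∑ y, min (P x y) (P x' y) := by
    have hpt : ∀ y, |P x y - P x' y| = P x y + P x' y - 2 * min (P x y) (P x' y) := by
      intro y
      rcases le_total (P x y) (P x' y) with h | h
      · rw [abs_of_nonpos (by linarith), min_eq_left h]; ring
      · rw [abs_of_nonneg (by linarith), min_eq_right h]; ring
    rw [Finset.sum_congr rfl fun y _ => hpt y]
    rw [Finset.sum_sub_distrib, Finset.sum_add_distrib, ← Finset.mul_sum, hP.2 x, hP.2 x']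
    ring
  have h2 := dob_le P hP x x'
  linarith

lemma l1Dev_le_two {φ ψ : S → ℝ} (hφ : IsDistribution φ) (hψ : IsDistribution ψ) :
    l1Dev φ ψ ≤ 2 := by
  unfold l1Dev
  calc ∑ x, |φ x - ψ x| ≤ ∑ x, (φ x + ψ x) := by
        refine Finset.sum_le_sum fun x _ => ?_
        have := abs_sub (φ x) (ψ x)
        calc |φ x - ψ x| ≤ |φ x| + |ψ x| := abs_sub _ _
          _ = φ x + ψ x := by rw [abs_of_nonneg (hφ.1 x), abs_of_nonneg (hψ.1 x)]
    _ = 2 := by rw [Finset.sum_add_distrib, hφ.2, hψ.2]; norm_num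

lemma contraction_step (P : Matrix S S ℝ) (hP : IsStochastic P)
    (φ ψ : S → ℝ) (hφ : IsDistribution φ) (hψ : IsDistribution ψ) :
    l1Dev (Matrix.vecMul φ P) (Matrix.vecMul ψ P) ≤ (1 - dobrushin P) * l1Dev φ ψ := by
  set δ : S → ℝ := fun x => φ x - ψ x with hδ
  set dp : S → ℝ := fun x => max (δ x) 0 with hdp
  set dm : S → ℝ := fun x => max (-δ x) 0 with hdm
  have hdpn : ∀ x, 0 ≤ dp x := fun x => le_max_right _ _
  have hdmn : ∀ x, 0 ≤ dm x := fun x => le_max_right _ _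
  have hsub : ∀ x, dp x - dm x = δ x := by
    intro x; simp only [hdp, hdm]
    rcases le_total (δ x) 0 with h | h
    · rw [max_eq_right h, max_eq_left (by linarith)]; ring
    · rw [max_eq_left h, max_eq_right (by linarith)]; ring
  have habs : ∀ x, dp x + dm x = |δ x| := by
    intro x; simp only [hdp, hdm]
    rcases le_total (δ x) 0 with h | h
    · rw [max_eq_right h, max_eq_left (by linarith), abs_of_nonpos h]; ring
    · rw [max_eq_left h, max_eq_right (by linarith), abs_of_nonneg h]; ring
  set a : ℝ := ∑ x, dp x with ha
  have hsum0 : ∑ x, δ x = 0 := by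
    simp only [hδ, Finset.sum_sub_distrib, hφ.2, hψ.2, sub_self]
  have hma : ∑ x, dm x = a := by
    have : ∑ x, (dp x - dm x) = 0 := by
      rw [Finset.sum_congr rfl fun x _ => hsub x]; exact hsum0
    rw [Finset.sum_sub_distrib] at this
    linarith
  have hl1 : l1Dev φ ψ = 2 * a := by
    unfold l1Dev
    have : ∀ x, |φ x - ψ x| = dp x + dm x := fun x => (habs x).symm
    rw [Finset.sum_congr rfl fun x _ => this x, Finset.sum_add_distrib, hma, ← ha]
    ring
  -- case a = 0
  have han : 0 ≤ a := Finset.sum_nonneg fun x _ => hdpn x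
  rcases eq_or_lt_of_le han with haz | hapos
  · have hdz : ∀ x, δ x = 0 := by
      intro x
      have hp0 : dp x = 0 := by
        have := Finset.sum_eq_zero_iff_of_nonneg (fun x _ => hdpn x) |>.mp haz.symm
        exact this x (Finset.mem_univ x)
      have hm0 : dm x = 0 := by
        have := Finset.sum_eq_zero_iff_of_nonneg (fun x _ => hdmn x) |>.mp
          (by rw [hma]; exact haz.symm)
        exact this x (Finset.mem_univ x)
      rw [← hsub x, hp0, hm0]; ring
    have hfe : φ = ψ := funext fun x => by have := hdz x; simp only [hδ] at this; linarith
    rw [hfe]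
    have h2 : l1Dev (Matrix.vecMul ψ P) (Matrix.vecMul ψ P) = 0 := by unfold l1Dev; simp
    have h3 : l1Dev ψ ψ = 0 := by unfold l1Dev; simp
    rw [h2, h3]; simp
  -- case a > 0
  set g : S → ℝ := fun y => ∑ x, δ x * P x y with hg
  have hgv : ∀ y, Matrix.vecMul φ P y - Matrix.vecMul ψ P y = g y := by
    intro y
    rw [vecMul_apply', vecMul_apply', hg, ← Finset.sum_sub_distrib]
    exact Finset.sum_congr rfl fun x _ => by simp only [hδ]; ring
  have key : ∀ y, a * g y = ∑ x, ∑ x', dp x * dm x' * (P x y - P x' y) := by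
    intro y
    have e1 : ∑ x, ∑ x', dp x * dm x' * (P x y - P x' y)
        = (∑ x, dp x * P x y) * (∑ x', dm x') - (∑ x, dp x) * (∑ x', dm x' * P x' y) := by
      rw [Finset.sum_mul_sum, Finset.sum_mul_sum, ← Finset.sum_sub_distrib]
      refine Finset.sum_congr rfl fun x _ => ?_
      rw [← Finset.sum_sub_distrib]
      exact Finset.sum_congr rfl fun x' _ => by ring
    rw [e1, hma, ← ha]
    have e2 : ∑ x, dp x * P x y - ∑ x, dm x * P x y = g y := by
      rw [← Finset.sum_sub_distrib, hg]
      exact Finset.sum_congr rfl fun x _ => by rw [← hsub x]; ring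
    nlinarith [e2]
  have hbound : ∀ y, a * |g y| ≤ ∑ x, ∑ x', dp x * dm x' * |P x y - P x' y| := by
    intro y
    rw [← abs_of_nonneg han, ← abs_mul, key y]
    calc |∑ x, ∑ x', dp x * dm x' * (P x y - P x' y)|
        ≤ ∑ x, |∑ x', dp x * dm x' * (P x y - P x' y)| := Finset.abs_sum_le_sum_abs _ _
      _ ≤ ∑ x, ∑ x', |dp x * dm x' * (P x y - P x' y)| :=
          Finset.sum_le_sum fun x _ => Finset.abs_sum_le_sum_abs _ _
      _ = ∑ x, ∑ x', dp x * dm x' * |P x y - P x' y| := by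
          refine Finset.sum_congr rfl fun x _ => Finset.sum_congr rfl fun x' _ => ?_
          rw [abs_mul, abs_mul, abs_of_nonneg (hdpn x), abs_of_nonneg (hdmn x')]
  have main : a * l1Dev (Matrix.vecMul φ P) (Matrix.vecMul ψ P)
      ≤ a * ((1 - dobrushin P) * l1Dev φ ψ) := by
    have lhs_eq : a * l1Dev (Matrix.vecMul φ P) (Matrix.vecMul ψ P)
        = ∑ y, a * |g y| := by
      unfold l1Dev
      rw [Finset.mul_sum]
      exact Finset.sum_congr rfl fun y _ => by rw [hgv y]
    rw [lhs_eq]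
    calc ∑ y, a * |g y| ≤ ∑ y, ∑ x, ∑ x', dp x * dm x' * |P x y - P x' y| :=
          Finset.sum_le_sum fun y _ => hbound y
      _ = ∑ x, ∑ x', dp x * dm x' * ∑ y, |P x y - P x' y| := by
          rw [Finset.sum_comm]
          refine Finset.sum_congr rfl fun x _ => ?_
          rw [Finset.sum_comm]
          refine Finset.sum_congr rfl fun x' _ => ?_
          rw [Finset.mul_sum]
      _ ≤ ∑ x, ∑ x', dp x * dm x' * (2 * (1 - dobrushin P)) := by
          refine Finset.sum_le_sum fun x _ => Finset.sum_le_sum fun x' _ => ?_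
          exact mul_le_mul_of_nonneg_left (row_dist P hP x x')
            (mul_nonneg (hdpn x) (hdmn x'))
      _ = a * a * (2 * (1 - dobrushin P)) := by
          have haa : a * a = ∑ x, ∑ x', dp x * dm x' := by
            nth_rewrite 1 [ha]
            nth_rewrite 1 [← hma]
            rw [Finset.sum_mul_sum]
          rw [haa, Finset.sum_mul]
          exact Finset.sum_congr rfl fun x _ => by rw [Finset.sum_mul]
      _ = a * ((1 - dobrushin P) * l1Dev φ ψ) := by rw [hl1]; ring
  exact le_of_mul_le_mul_left main hapos


lemma l1_nonneg (φ ψ : S → ℝ) : 0 ≤ l1Dev φ ψ :=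
  Finset.sum_nonneg fun x _ => abs_nonneg _

lemma contraction_iter [DecidableEq S] (P : Matrix S S ℝ) (hP : IsStochastic P)
    (φ ψ : S → ℝ) (hφ : IsDistribution φ) (hψ : IsDistribution ψ) (t : ℕ) :
    l1Dev (Matrix.vecMul φ (P ^ t)) (Matrix.vecMul ψ (P ^ t)) ≤
      (1 - dobrushin P) ^ t * l1Dev φ ψ := by
  induction t with
  | zero => simp [Matrix.vecMul_one]
  | succ n ih =>
    rw [pow_succ, pow_succ, ← Matrix.vecMul_vecMul, ← Matrix.vecMul_vecMul]
    calc l1Dev (Matrix.vecMul (Matrix.vecMul φ (P ^ n)) P)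
          (Matrix.vecMul (Matrix.vecMul ψ (P ^ n)) P)
        ≤ (1 - dobrushin P) * l1Dev (Matrix.vecMul φ (P ^ n)) (Matrix.vecMul ψ (P ^ n)) :=
          contraction_step P hP _ _ (dist_vecMul (stoch_pow hP n) hφ)
            (dist_vecMul (stoch_pow hP n) hψ)
      _ ≤ (1 - dobrushin P) * ((1 - dobrushin P) ^ n * l1Dev φ ψ) :=
          mul_le_mul_of_nonneg_left ih (one_sub_dob_nonneg P hP)
      _ = (1 - dobrushin P) ^ n * (1 - dobrushin P) * l1Dev φ ψ := by ring

lemma geo_bound [DecidableEq S] (P : Matrix S S ℝ) (hP : IsStochastic P) (k : ℕ)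
    (φ ψ : S → ℝ) (hφ : IsDistribution φ) (hψ : IsDistribution ψ) (m : ℕ) :
    l1Dev (Matrix.vecMul φ (P ^ m)) (Matrix.vecMul ψ (P ^ m)) ≤
      2 * (1 - dobrushin (P ^ k)) ^ (m / k) := by
  rcases isEmpty_or_nonempty S with hS | hS
  · have h0 : l1Dev (Matrix.vecMul φ (P ^ m)) (Matrix.vecMul ψ (P ^ m)) = 0 := by
      unfold l1Dev; simp
    rw [h0]
    have := one_sub_dob_nonneg (P ^ k) (stoch_pow hP k)
    positivity
  · set q := m / k with hq
    set r := m % k with hr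
    have hm : m = k * q + r := (Nat.div_add_mod m k).symm
    have hpow : P ^ m = (P ^ k) ^ q * P ^ r := by rw [hm, pow_add, pow_mul]
    have hA : IsDistribution (Matrix.vecMul φ ((P ^ k) ^ q)) :=
      dist_vecMul (stoch_pow (stoch_pow hP k) q) hφ
    have hB : IsDistribution (Matrix.vecMul ψ ((P ^ k) ^ q)) :=
      dist_vecMul (stoch_pow (stoch_pow hP k) q) hψ
    have hd0 : 0 ≤ dobrushin P := by
      have : Nonempty (S × S) := by infer_instance
      exact dob_nonneg P hP
    calc l1Dev (Matrix.vecMul φ (P ^ m)) (Matrix.vecMul ψ (P ^ m))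
        = l1Dev (Matrix.vecMul (Matrix.vecMul φ ((P ^ k) ^ q)) (P ^ r))
            (Matrix.vecMul (Matrix.vecMul ψ ((P ^ k) ^ q)) (P ^ r)) := by
          rw [hpow, Matrix.vecMul_vecMul, Matrix.vecMul_vecMul]
      _ ≤ (1 - dobrushin P) ^ r *
            l1Dev (Matrix.vecMul φ ((P ^ k) ^ q)) (Matrix.vecMul ψ ((P ^ k) ^ q)) :=
          contraction_iter P hP _ _ hA hB r
      _ ≤ 1 * l1Dev (Matrix.vecMul φ ((P ^ k) ^ q)) (Matrix.vecMul ψ ((P ^ k) ^ q)) := by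
          refine mul_le_mul_of_nonneg_right ?_ (l1_nonneg _ _)
          exact pow_le_one₀ (one_sub_dob_nonneg P hP) (by linarith)
      _ = l1Dev (Matrix.vecMul φ ((P ^ k) ^ q)) (Matrix.vecMul ψ ((P ^ k) ^ q)) :=
          one_mul _
      _ ≤ (1 - dobrushin (P ^ k)) ^ q * l1Dev φ ψ :=
          contraction_iter (P ^ k) (stoch_pow hP k) φ ψ hφ hψ q
      _ ≤ (1 - dobrushin (P ^ k)) ^ q * 2 :=
          mul_le_mul_of_nonneg_left (l1Dev_le_two hφ hψ)
            (pow_nonneg (one_sub_dob_nonneg (P ^ k) (stoch_pow hP k)) q)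
      _ = 2 * (1 - dobrushin (P ^ k)) ^ q := mul_comm _ _

lemma pointwise_le_l1 (φ ψ : S → ℝ) (x : S) : |φ x - ψ x| ≤ l1Dev φ ψ :=
  Finset.single_le_sum (fun y _ => abs_nonneg (φ y - ψ y)) (Finset.mem_univ x)

end

/-- Markov–Dobrushin contraction: for a stochastic matrix P and distributions
φ, ψ, ‖φP − ψP‖₁ ≤ (1 − α(P))‖φ − ψ‖₁ and, by iteration,
‖φP^t − ψP^t‖₁ ≤ (1 − α(P))^t ‖φ − ψ‖₁ for all t.  If α(P^k) > 0 for some k,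
then P has a unique stationary distribution ψ* and φP^t → ψ* for every
distribution φ. -/
theorem markov_dobrushin_contraction
    {S : Type*} [Fintype S] [DecidableEq S] (P : Matrix S S ℝ) (hP : IsStochastic P) :
    (∀ φ ψ : S → ℝ, IsDistribution φ → IsDistribution ψ →
      l1Dev (Matrix.vecMul φ P) (Matrix.vecMul ψ P) ≤
        (1 - dobrushin P) * l1Dev φ ψ ∧
      ∀ t : ℕ, l1Dev (Matrix.vecMul φ (P ^ t)) (Matrix.vecMul ψ (P ^ t)) ≤
        (1 - dobrushin P) ^ t * l1Dev φ ψ) ∧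
    ((∃ k : ℕ, 0 < dobrushin (P ^ k)) →
      ∃ ψs : S → ℝ, (IsDistribution ψs ∧ Matrix.vecMul ψs P = ψs) ∧
        (∀ ψ' : S → ℝ, IsDistribution ψ' ∧ Matrix.vecMul ψ' P = ψ' → ψ' = ψs) ∧
        ∀ φ : S → ℝ, IsDistribution φ →
          Tendsto (fun t : ℕ => Matrix.vecMul φ (P ^ t)) atTop (𝓝 ψs)) := by
  constructor
  · intro φ ψ hφ hψ
    exact ⟨contraction_step P hP φ ψ hφ hψ, fun t => contraction_iter P hP φ ψ hφ hψ t⟩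
  rintro ⟨k, hk⟩
  have hSne : Nonempty S := by
    by_contra h
    have hE : IsEmpty S := not_nonempty_iff.mp h
    have : IsEmpty (S × S) := by infer_instance
    rw [dobrushin, Real.iInf_of_isEmpty] at hk
    exact lt_irrefl 0 hk
  obtain ⟨k', hk'pos, hk'⟩ : ∃ k' : ℕ, 0 < k' ∧ 0 < dobrushin (P ^ k') := by
    rcases Nat.eq_zero_or_pos k with rfl | hkpos
    · have hsub : ∀ x x' : S, x = x' := by
        intro x x'
        by_contra hxx
        have hle := dob_le (P ^ 0) (stoch_pow hP 0) x x'
        rw [pow_zero] at hle hk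
        have hz : ∑ y, min ((1 : Matrix S S ℝ) x y) ((1 : Matrix S S ℝ) x' y) = 0 := by
          refine Finset.sum_eq_zero fun y _ => ?_
          by_cases h1 : x = y
          · have h2 : x' ≠ y := fun h => hxx (h1.trans h.symm)
            simp [Matrix.one_apply, h1, h2]
          · by_cases h2 : x' = y <;> simp [Matrix.one_apply, h1, h2]
        rw [hz] at hle
        linarith
      refine ⟨1, one_pos, ?_⟩
      rw [pow_one]
      have h1 : (1 : ℝ) ≤ dobrushin P := by
        refine le_ciInf fun p => ?_
        have hpe : p.1 = p.2 := hsub p.1 p.2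
        rw [hpe]
        simp only [min_self]
        exact le_of_eq (hP.2 p.2).symm
      linarith
    · exact ⟨k, hkpos, hk⟩
  set β := 1 - dobrushin (P ^ k') with hβ
  have hβ0 : 0 ≤ β := one_sub_dob_nonneg _ (stoch_pow hP k')
  have hβ1 : β < 1 := by rw [hβ]; linarith
  set b : ℕ → ℝ := fun N => 2 * β ^ (N / k') with hbdef
  have hb0 : Tendsto b atTop (𝓝 0) := by
    have h1 : Tendsto (fun n : ℕ => β ^ n) atTop (𝓝 0) :=
      tendsto_pow_atTop_nhds_zero_of_lt_one hβ0 hβ1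
    have h2 : Tendsto (fun N : ℕ => N / k') atTop atTop :=
      Filter.tendsto_atTop_atTop.mpr fun c =>
        ⟨c * k', fun n hn => (Nat.le_div_iff_mul_le hk'pos).mpr hn⟩
    have h3 := (h1.comp h2).const_mul (2 : ℝ)
    simpa [hbdef, Function.comp] using h3
  have hmono : ∀ N n : ℕ, N ≤ n → b n ≤ b N := by
    intro N n hNn
    have := pow_le_pow_of_le_one hβ0 hβ1.le (Nat.div_le_div_right (c := k') hNn)
    simp only [hbdef]
    linarith
  set φ₀ : S → ℝ := fun _ => (Fintype.card S : ℝ)⁻¹ with hφ₀def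
  have hcard : (0 : ℝ) < Fintype.card S := by
    exact_mod_cast Fintype.card_pos_iff.mpr hSne
  have hφ₀ : IsDistribution φ₀ := by
    constructor
    · intro x; positivity
    · simp only [hφ₀def, Finset.sum_const, Finset.card_univ, nsmul_eq_mul]
      field_simp
  set f : ℕ → S → ℝ := fun t => Matrix.vecMul φ₀ (P ^ t) with hfdef
  have hft : ∀ t, IsDistribution (f t) := fun t => dist_vecMul (stoch_pow hP t) hφ₀
  have hgb : ∀ (χ χ' : S → ℝ), IsDistribution χ → IsDistribution χ' → ∀ m : ℕ,
      l1Dev (Matrix.vecMul χ (P ^ m)) (Matrix.vecMul χ' (P ^ m)) ≤ b m := by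
    intro χ χ' hχ hχ' m
    simpa [hbdef, hβ] using geo_bound P hP k' χ χ' hχ hχ' m
  have base : ∀ n m : ℕ, n ≤ m → ∀ x, |f n x - f m x| ≤ b n := by
    intro n m hnm x
    have hm : P ^ m = P ^ (m - n) * P ^ n := by rw [← pow_add, Nat.sub_add_cancel hnm]
    have hfm : f m = Matrix.vecMul (Matrix.vecMul φ₀ (P ^ (m - n))) (P ^ n) := by
      simp only [hfdef]
      rw [hm, Matrix.vecMul_vecMul]
    calc |f n x - f m x| ≤ l1Dev (f n) (f m) := pointwise_le_l1 _ _ x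
      _ = l1Dev (Matrix.vecMul φ₀ (P ^ n))
            (Matrix.vecMul (Matrix.vecMul φ₀ (P ^ (m - n))) (P ^ n)) := by rw [hfm]
      _ ≤ b n := hgb _ _ hφ₀ (dist_vecMul (stoch_pow hP (m - n)) hφ₀) n
  have hgap : ∀ N n m : ℕ, N ≤ n → N ≤ m → ∀ x, |f n x - f m x| ≤ b N := by
    intro N n m hNn hNm x
    rcases le_total n m with h | h
    · exact (base n m h x).trans (hmono N n hNn)
    · rw [abs_sub_comm]
      exact (base m n h x).trans (hmono N m hNm)
  have hcauchy : ∀ x, ∃ L, Tendsto (fun t => f t x) atTop (𝓝 L) := by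
    intro x
    refine cauchySeq_tendsto_of_complete (cauchySeq_of_le_tendsto_0 b ?_ hb0)
    intro n m N hn hm
    simpa [Real.dist_eq] using hgap N n m hn hm x
  choose ψs hψs using hcauchy
  have hconv : ∀ χ : S → ℝ, IsDistribution χ → ∀ x,
      Tendsto (fun t => Matrix.vecMul χ (P ^ t) x) atTop (𝓝 (ψs x)) := by
    intro χ hχ x
    have hzero : Tendsto (fun t => Matrix.vecMul χ (P ^ t) x - f t x) atTop (𝓝 0) := by
      refine squeeze_zero_norm (fun t => ?_) hb0
      have h1 : |Matrix.vecMul χ (P ^ t) x - f t x|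
          ≤ l1Dev (Matrix.vecMul χ (P ^ t)) (f t) := pointwise_le_l1 _ _ x
      exact h1.trans (hgb _ _ hχ hφ₀ t)
    have h2 := hzero.add (hψs x)
    rw [zero_add] at h2
    exact h2.congr fun t => by ring
  have hψsd : IsDistribution ψs := by
    constructor
    · intro x
      exact ge_of_tendsto' (hψs x) fun t => (hft t).1 x
    · have h1 : Tendsto (fun t => ∑ x, f t x) atTop (𝓝 (∑ x, ψs x)) :=
        tendsto_finset_sum _ fun x _ => hψs x
      have h2 : (fun t => ∑ x, f t x) = fun _ => (1 : ℝ) := funext fun t => (hft t).2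
      rw [h2] at h1
      exact (tendsto_nhds_unique h1 tendsto_const_nhds)
  have hstat : Matrix.vecMul ψs P = ψs := by
    funext x
    have h1 : Tendsto (fun t => ∑ x', f t x' * P x' x) atTop
        (𝓝 (∑ x', ψs x' * P x' x)) :=
      tendsto_finset_sum _ fun x' _ => (hψs x').mul_const _
    have h2 : ∀ t, ∑ x', f t x' * P x' x = f (t + 1) x := by
      intro t
      simp only [hfdef]
      rw [pow_succ, ← Matrix.vecMul_vecMul, vecMul_apply']
    have h3 : Tendsto (fun t => f (t + 1) x) atTop (𝓝 (ψs x)) :=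
      (hψs x).comp (tendsto_add_atTop_nat 1)
    rw [vecMul_apply']
    exact tendsto_nhds_unique (h1.congr h2) h3
  refine ⟨ψs, ⟨hψsd, hstat⟩, ?_, fun φ hφ => ?_⟩
  · rintro ψ' ⟨hd, hs⟩
    funext x
    have hfix : ∀ t : ℕ, Matrix.vecMul ψ' (P ^ t) = ψ' := by
      intro t
      induction t with
      | zero => simp [Matrix.vecMul_one]
      | succ n ih => rw [pow_succ, ← Matrix.vecMul_vecMul, ih, hs]
    have h4 := hconv ψ' hd x
    simp only [hfix] at h4
    exact (tendsto_nhds_unique h4 tendsto_const_nhds).symm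
  · rw [tendsto_pi_nhds]
    exact fun x => hconv φ hφ x
end
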